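/- arXiv:2107.04492 — 2 statements merged into one kernel-verified Lean document; each statement's English description precedes it below -/
import Mathlib

section
/- Let u ∈ ℕ* and let i ≠ j be elements of supp(u). Then the following are equivalent: (1) σ_u(j) < σ_u(i) and there is no k in the closed interval between i and j with σ_u(k) < σ_u(j); (2) u factorizes as u = u'·i·u''·j·u''' with supp(u''') disjoint from the closed interval between i and j. -/
/-- `sigmaW u x` is the number of distinct letters in the shortest suffix of
`u` containing `x` (the rank of `x` in the right-to-left order of rightmost
occurrences). -/
def sigmaW (u : List ℕ) (x : ℕ) : ℕ :=
  ((u.reverse.take (u.reverse.idxOf x + 1)).dedup).length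

private lemma mem_take_idx_lt {l : List ℕ} {a : ℕ} {n : ℕ} (h : a ∈ l.take n) :
    l.idxOf a < n := by
  induction l generalizing n with
  | nil => simp at h
  | cons b t ih =>
    cases n with
    | zero => simp at h
    | succ m =>
      simp only [List.take_succ_cons, List.mem_cons] at h
      by_cases hab : a = b
      · subst hab; simp [List.idxOf_cons_self]
      · rw [List.idxOf_cons_ne _ (Ne.symm hab)]
        have := ih (h.resolve_left hab)
        omega

private lemma take_sub {l : List ℕ} {m n : ℕ} (h : m ≤ n) : l.take m ⊆ l.take n := by
  have heq : l.take m = (l.take n).take m := by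
    rw [List.take_take, min_eq_left h]
  rw [heq]
  exact List.take_subset _ _

private lemma dedup_take_le {r : List ℕ} {m n : ℕ} (h : m ≤ n) :
    ((r.take m).dedup).length ≤ ((r.take n).dedup).length := by
  rw [← List.card_toFinset, ← List.card_toFinset]
  apply Finset.card_le_card
  intro x hx
  rw [List.mem_toFinset] at *
  exact take_sub h hx

private lemma sigma_lt {u : List ℕ} {a b : ℕ} (hb : b ∈ u)
    (h : u.reverse.idxOf a < u.reverse.idxOf b) : sigmaW u a < sigmaW u b := by
  have hbr : b ∈ u.reverse := by rw [List.mem_reverse]; exact hb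
  unfold sigmaW
  set r := u.reverse with hr
  rw [← List.card_toFinset, ← List.card_toFinset]
  apply Finset.card_lt_card
  constructor
  · intro x hx
    rw [List.mem_toFinset] at *
    exact take_sub (by omega) hx
  · intro hsub
    have hbin : b ∈ (r.take (r.idxOf b + 1)).toFinset := by
      rw [List.mem_toFinset]
      have hlen : r.idxOf b < r.length := List.idxOf_lt_length_iff.2 hbr
      have : r[r.idxOf b] = b := List.getElem_idxOf hlen
      rw [List.mem_take_iff_getElem]
      exact ⟨r.idxOf b, by omega, this⟩
    have := hsub hbin
    rw [List.mem_toFinset] at this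
    have := mem_take_idx_lt this
    omega

private lemma sigma_le {u : List ℕ} {a b : ℕ}
    (h : u.reverse.idxOf a ≤ u.reverse.idxOf b) : sigmaW u a ≤ sigmaW u b := by
  unfold sigmaW
  exact dedup_take_le (by omega)

/-- For a word u and distinct letters i, j ∈ supp(u), the
following are equivalent: (1) σ_u(j) < σ_u(i) and no k ∈ supp(u) in the closed
interval between i and j has σ_u(k) < σ_u(j); (2) u factorizes as
u'·i·u''·j·u''' with supp(u''') disjoint from the interval between i and j. -/
theorem stmt_14 (u : List ℕ) (i j : ℕ) (hi : i ∈ u) (hj : j ∈ u) (hij : i ≠ j) :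
    (sigmaW u j < sigmaW u i ∧
      ¬∃ k ∈ u, min i j ≤ k ∧ k ≤ max i j ∧ sigmaW u k < sigmaW u j) ↔
    (∃ u' u'' u''' : List ℕ, u = u' ++ i :: u'' ++ j :: u''' ∧
      ∀ k ∈ u''', k < min i j ∨ max i j < k) := by
  constructor
  · rintro ⟨hlt, hno⟩
    set r := u.reverse with hr
    have hjr : j ∈ r := by rw [hr, List.mem_reverse]; exact hj
    have hjlen : r.idxOf j < r.length := List.idxOf_lt_length_iff.2 hjr
    have hsplit : r = r.take (r.idxOf j) ++ j :: r.drop (r.idxOf j + 1) := by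
      conv_lhs => rw [← List.take_append_drop (r.idxOf j) r]
      rw [List.drop_eq_getElem_cons hjlen, List.getElem_idxOf hjlen]
    have hu : u = (r.drop (r.idxOf j + 1)).reverse ++ j :: (r.take (r.idxOf j)).reverse := by
      have : u = r.reverse := by rw [hr, List.reverse_reverse]
      rw [this]
      conv_lhs => rw [hsplit]
      simp
    set w := (r.take (r.idxOf j)).reverse with hw
    set v := (r.drop (r.idxOf j + 1)).reverse with hv
    -- any k in w that is in the interval gives a contradiction
    have hwkey : ∀ k ∈ w, k < min i j ∨ max i j < k := by
      intro k hk
      by_contra hcon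
      push_neg at hcon
      have hk' : k ∈ r.take (r.idxOf j) := by rwa [hw, List.mem_reverse] at hk
      have hku : k ∈ u := by
        have : k ∈ r := List.take_subset _ _ hk'
        rwa [hr, List.mem_reverse] at this
      have hidx : r.idxOf k < r.idxOf j := mem_take_idx_lt hk'
      exact hno ⟨k, hku, hcon.1, hcon.2, sigma_lt hj hidx⟩
    -- i ∈ v
    have hiv : i ∈ v := by
      have : i ∈ v ++ j :: w := by rw [← hu]; exact hi
      rcases List.mem_append.1 this with h | h
      · exact h
      · rcases List.mem_cons.1 h with h | h
        · exact absurd h hij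
        · exfalso
          rcases hwkey i h with hc | hc <;> omega
    rcases List.append_of_mem hiv with ⟨u', u'', hv'⟩
    refine ⟨u', u'', w, ?_, hwkey⟩
    rw [hu, hv']
  · rintro ⟨u', u'', u''', huu, hdisj⟩
    have hj3 : j ∉ u''' := by
      intro h
      rcases hdisj j h with h | h <;> omega
    have hi3 : i ∉ u''' := by
      intro h
      rcases hdisj i h with h | h <;> omega
    have hrev : u.reverse = u'''.reverse ++ j :: (u''.reverse ++ i :: u'.reverse) := by
      rw [huu]; simp
    have hidxj : u.reverse.idxOf j = u'''.length := by
      rw [hrev, List.idxOf_append_of_notMem (by simpa using hj3)]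
      simp [List.idxOf_cons_self]
    have hgen : ∀ k, k ∉ u''' → k ≠ j → u.reverse.idxOf j < u.reverse.idxOf k := by
      intro k hk3 hkj
      rw [hidxj, hrev, List.idxOf_append_of_notMem (by simpa using hk3)]
      rw [List.idxOf_cons_ne _ (Ne.symm hkj)]
      simp
    constructor
    · exact sigma_lt hi (hgen i hi3 hij)
    · rintro ⟨k, hku, hk1, hk2, hklt⟩
      by_cases hkj : k = j
      · subst hkj; omega
      · have hk3 : k ∉ u''' := by
          intro h
          rcases hdisj k h with h | h <;> omega
        have := sigma_le (le_of_lt (hgen k hk3 hkj))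
        omega
end

section
/- In the right patience sorting monoid rPS_n, the number of changes of the bottom row during the iterative left-to-right insertion of a word w ∈ [n]* (starting from the empty tableau) is at most n(n+1)/2, and this bound is attained: there is a word whose insertion produces n(n+1)/2 bottom-row changes. -/
/-- An rPS-tableau is represented as the list of its columns, left to right,
each column a list of symbols with the bottom entry first.  Inserting `a`:
if `a` is greater than every bottom entry, a new column `[a]` is appended at
the right; otherwise the leftmost column whose bottom entry is ≥ a is slid up
and `a` is placed at its bottom. -/
def rpsInsert {n : ℕ} [NeZero n] :
    List (List (Fin n)) → Fin n → List (List (Fin n))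
  | [], a => [[a]]
  | c :: rest, a => if a ≤ c.headI then (a :: c) :: rest else c :: rpsInsert rest a

/-- The bottom row of a tableau. -/
def bottomRow {n : ℕ} [NeZero n] (T : List (List (Fin n))) : List (Fin n) :=
  T.map List.headI

/-- The number of steps at which the bottom row changes during the iterative
left-to-right insertion of the word w, starting from the empty tableau. -/
def rpsChanges {n : ℕ} [NeZero n] (w : List (Fin n)) : ℕ :=
  (w.foldl
    (fun s a =>
      (rpsInsert s.1 a,
        s.2 + if bottomRow (rpsInsert s.1 a) = bottomRow s.1 then 0 else 1))
    (([] : List (List (Fin n))), 0)).2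

open List

section Aux
variable {n : ℕ} [NeZero n]

def runT (T : List (List (Fin n))) (w : List (Fin n)) : List (List (Fin n)) :=
  w.foldl rpsInsert T

def cnt (T : List (List (Fin n))) (w : List (Fin n)) : ℕ :=
  (w.foldl
    (fun s a =>
      (rpsInsert s.1 a,
        s.2 + if bottomRow (rpsInsert s.1 a) = bottomRow s.1 then 0 else 1))
    (T, 0)).2

lemma foldl_eq (w : List (Fin n)) : ∀ (T : List (List (Fin n))) (c : ℕ),
    (w.foldl
      (fun s a =>
        (rpsInsert s.1 a,
          s.2 + if bottomRow (rpsInsert s.1 a) = bottomRow s.1 then 0 else 1))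
      (T, c)) = (runT T w, c + cnt T w) := by
  induction w with
  | nil => intro T c; simp [runT, cnt]
  | cons a w ih =>
      intro T c
      simp only [foldl_cons, runT, cnt] at *
      rw [ih]
      conv_rhs => rw [ih]
      simp [Nat.add_assoc]

lemma rpsChanges_eq (w : List (Fin n)) : rpsChanges w = cnt [] w := rfl

lemma cnt_cons (T : List (List (Fin n))) (a : Fin n) (w : List (Fin n)) :
    cnt T (a :: w) =
      (if bottomRow (rpsInsert T a) = bottomRow T then 0 else 1) + cnt (rpsInsert T a) w := by
  simp only [cnt, foldl_cons]
  rw [show ((rpsInsert T a, (0:ℕ) + if bottomRow (rpsInsert T a) = bottomRow T then 0 else 1)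
      = (rpsInsert T a, (if bottomRow (rpsInsert T a) = bottomRow T then 0 else 1))) by simp]
  rw [foldl_eq]
  rfl

lemma runT_cons (T : List (List (Fin n))) (a : Fin n) (w : List (Fin n)) :
    runT T (a :: w) = runT (rpsInsert T a) w := rfl

lemma cnt_append (T : List (List (Fin n))) (w₁ w₂ : List (Fin n)) :
    cnt T (w₁ ++ w₂) = cnt T w₁ + cnt (runT T w₁) w₂ := by
  simp only [cnt, foldl_append]
  rw [foldl_eq, foldl_eq, foldl_eq]
  simp

lemma runT_append (T : List (List (Fin n))) (w₁ w₂ : List (Fin n)) :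
    runT T (w₁ ++ w₂) = runT (runT T w₁) w₂ := by
  simp [runT, foldl_append]

end Aux

section Upper
variable {n : ℕ} [NeZero n]

def bv (T : List (List (Fin n))) : List ℕ := T.map (fun c => (c.headI : ℕ))

def phi (T : List (List (Fin n))) : ℕ := ((bv T).map (fun b => n - b)).sum

lemma insert_step (a : Fin n) : ∀ (T : List (List (Fin n))),
    (bv T).Chain' (· < ·) →
    (bv (rpsInsert T a)).Chain' (· < ·) ∧
    phi T + (if bottomRow (rpsInsert T a) = bottomRow T then 0 else 1) ≤ phi (rpsInsert T a) ∧
    ((bv (rpsInsert T a)).head? = some (a : ℕ) ∨ (bv (rpsInsert T a)).head? = (bv T).head?) := by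
  intro T
  induction T with
  | nil =>
      intro _
      have ha : (a : ℕ) < n := a.isLt
      refine ⟨by simp [rpsInsert, bv]; exact List.isChain_singleton _, ?_, Or.inl (by simp [rpsInsert, bv])⟩
      simp only [rpsInsert, bv, phi, bottomRow]
      simp
      omega
  | cons c rest ih =>
      intro h
      rcases le_or_gt a c.headI with hac | hac
      · rcases eq_or_lt_of_le hac with heq | hlt
        · -- a = c.headI : nothing changes
          have h1 : rpsInsert (c :: rest) a = (a :: c) :: rest := by
            simp [rpsInsert, hac]
          rw [h1]
          have hbv : bv ((a :: c) :: rest) = bv (c :: rest) := by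
            simp [bv, heq]
          have hbr : bottomRow ((a :: c) :: rest) = bottomRow (c :: rest) := by
            simp [bottomRow, heq]
          have hphi : phi ((a :: c) :: rest) = phi (c :: rest) := by
            simp [phi, hbv]
          rw [hbv, hbr, hphi]
          refine ⟨h, by simp, Or.inr rfl⟩
        · -- a < c.headI : strict insertion at first column
          have h1 : rpsInsert (c :: rest) a = (a :: c) :: rest := by
            simp [rpsInsert, hac]
          rw [h1]
          have hvl : (a : ℕ) < (c.headI : ℕ) := hlt
          have hcn : (c.headI : ℕ) < n := (c.headI).isLt
          rw [show bv (c :: rest) = ((c.headI : ℕ)) :: bv rest from rfl] at h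
          simp only [List.Chain'] at h
          rw [List.isChain_cons] at h
          constructor
          · rw [show bv ((a :: c) :: rest) = (a : ℕ) :: bv rest by simp [bv]]
            simp only [List.Chain']
            rw [List.isChain_cons]
            exact ⟨fun y hy => lt_trans hvl (h.1 y hy), h.2⟩
          constructor
          · have hne : bottomRow ((a :: c) :: rest) ≠ bottomRow (c :: rest) := by
              simp only [bottomRow, List.map_cons, List.headI]
              intro hcontra
              have := (List.cons.injEq _ _ _ _).mp hcontra
              exact absurd this.1 (ne_of_lt hlt)
            rw [if_neg hne]
            simp only [phi, bv, List.map_cons, List.sum_cons, List.map_map, List.headI_cons]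
            omega
          · left; simp [bv]
      · -- c.headI < a : recurse
        have h1 : rpsInsert (c :: rest) a = c :: rpsInsert rest a := by
          simp [rpsInsert, not_le.mpr hac]
        rw [h1]
        rw [show bv (c :: rest) = ((c.headI : ℕ)) :: bv rest from rfl] at h
        simp only [List.Chain'] at h
        rw [List.isChain_cons] at h
        obtain ⟨ih1, ih2, ih3⟩ := ih h.2
        have hval : (c.headI : ℕ) < (a : ℕ) := hac
        constructor
        · rw [show bv (c :: rpsInsert rest a) = (c.headI : ℕ) :: bv (rpsInsert rest a) by
            simp [bv]]
          simp only [List.Chain']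
          rw [List.isChain_cons]
          refine ⟨fun y hy => ?_, ih1⟩
          rcases ih3 with h3 | h3
          · rw [h3] at hy; simp at hy; omega
          · rw [h3] at hy; exact h.1 y hy
        constructor
        · have hbr : bottomRow (c :: rpsInsert rest a) = c.headI :: bottomRow (rpsInsert rest a) := by
            simp [bottomRow]
          have hbr2 : bottomRow (c :: rest) = c.headI :: bottomRow rest := by
            simp [bottomRow]
          rw [hbr, hbr2]
          have hiff : (c.headI :: bottomRow (rpsInsert rest a) = c.headI :: bottomRow rest)
              ↔ (bottomRow (rpsInsert rest a) = bottomRow rest) := by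
            simp
          rw [show phi (c :: rpsInsert rest a) = (n - (c.headI : ℕ)) + phi (rpsInsert rest a) by
            simp [phi, bv]]
          rw [show phi (c :: rest) = (n - (c.headI : ℕ)) + phi rest by simp [phi, bv]]
          by_cases hc : bottomRow (rpsInsert rest a) = bottomRow rest
          · rw [if_pos (hiff.mpr hc)]
            rw [if_pos hc] at ih2
            omega
          · rw [if_neg (fun hh => hc (hiff.mp hh))]
            rw [if_neg hc] at ih2
            omega
        · right; simp [bv]

lemma fold_inv (w : List (Fin n)) : ∀ (T : List (List (Fin n))),
    (bv T).Chain' (· < ·) →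
    (bv (runT T w)).Chain' (· < ·) ∧ cnt T w + phi T ≤ phi (runT T w) := by
  induction w with
  | nil => intro T h; exact ⟨h, by simp [cnt, runT]⟩
  | cons a w ih =>
      intro T h
      obtain ⟨s1, s2, _⟩ := insert_step a T h
      obtain ⟨i1, i2⟩ := ih (rpsInsert T a) s1
      refine ⟨by rwa [runT_cons], ?_⟩
      rw [runT_cons, cnt_cons]
      omega

lemma sum_bound : ∀ (l : List ℕ), l.Pairwise (· < ·) →
    ∀ k, (∀ b ∈ l, k ≤ b ∧ b < n) →
    2 * (l.map (fun b => n - b)).sum ≤ (n - k) * (n - k + 1) := by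
  intro l
  induction l with
  | nil => intro _ k _; simp
  | cons b l ih =>
      intro hp k hk
      have hb := hk b (by simp)
      have hrest : ∀ x ∈ l, b + 1 ≤ x ∧ x < n := by
        intro x hx
        exact ⟨(List.rel_of_pairwise_cons hp hx), (hk x (by simp [hx])).2⟩
      have hih := ih hp.of_cons (b + 1) hrest
      simp only [List.map_cons, List.sum_cons]
      have h1 : n - (b+1) = n - b - 1 := by omega
      rw [h1] at hih
      -- 2*(n-b) + 2*rest ≤ 2*(n-b) + (n-b-1)*(n-b-1+1) ≤ (n-k)*(n-k+1)
      have key : 2 * (n - b) + (n - b - 1) * (n - b - 1 + 1) ≤ (n - k) * (n - k + 1) := by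
        obtain ⟨m, hm⟩ : ∃ m, n - b = m + 1 := ⟨n - b - 1, by omega⟩
        have hmM : m + 1 ≤ n - k := by omega
        calc 2 * (n - b) + (n - b - 1) * (n - b - 1 + 1)
            = (m + 1) * (m + 2) := by
              rw [hm]; simp only [Nat.add_sub_cancel]; ring
          _ ≤ (n - k) * (n - k + 1) := Nat.mul_le_mul hmM (by omega)
      omega

lemma upper (w : List (Fin n)) : rpsChanges w ≤ n * (n + 1) / 2 := by
  have h0 : (bv ([] : List (List (Fin n)))).Chain' (· < ·) := by simp [bv]; exact List.isChain_nil
  obtain ⟨hch, hle⟩ := fold_inv w [] h0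
  have hpair : (bv (runT [] w)).Pairwise (· < ·) := List.isChain_iff_pairwise.mp hch
  have hall : ∀ b ∈ bv (runT [] w), 0 ≤ b ∧ b < n := by
    intro b hb
    simp only [bv, List.mem_map] at hb
    obtain ⟨c, _, rfl⟩ := hb
    exact ⟨Nat.zero_le _, (c.headI).isLt⟩
  have hb := sum_bound (bv (runT [] w)) hpair 0 hall
  simp only [Nat.sub_zero] at hb
  rw [rpsChanges_eq]
  have hphi : cnt [] w ≤ phi (runT [] w) := by
    have : phi ([] : List (List (Fin n))) = 0 := by simp [phi, bv]
    omega
  have h2 : 2 * phi (runT [] w) ≤ n * (n + 1) := hb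
  set m := n * (n + 1)
  omega

end Upper

section Attain
variable {n : ℕ} [NeZero n]

def g (k : ℕ) : Fin n := ⟨min k (n-1), by have := NeZero.pos n; omega⟩

lemma g_val {k : ℕ} (h : k ≤ n - 1) : ((g k : Fin n) : ℕ) = k := by
  simp [g, Nat.min_eq_left h]

def col (y : ℕ) : List (Fin n) := (List.range (n - y)).map (fun j => g (y + j))

def Tab (k : ℕ) : List (List (Fin n)) := (List.range k).map col

def decL (v m : ℕ) : List (Fin n) := (List.range m).map (fun j => g (v - j))

lemma col_cons {y : ℕ} (h : y < n) : (col y : List (Fin n)) = g y :: col (y + 1) := by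
  have h1 : n - y = (n - (y + 1)) + 1 := by omega
  simp only [col, h1, List.range_succ_eq_map, List.map_cons, List.map_map]
  congr 1
  apply List.map_congr_left
  intro j _
  show g (y + (j + 1)) = g (y + 1 + j)
  congr 1
  omega

lemma col_headI {y : ℕ} (h : y < n) : (col y : List (Fin n)).headI = g y := by
  rw [col_cons h]; rfl

lemma col_last : (col (n - 1) : List (Fin n)) = [g (n - 1)] := by
  have h1 : n - (n - 1) = 1 := by have := NeZero.pos n; omega
  simp [col, h1, List.range_succ]

lemma Tab_succ (k : ℕ) : (Tab (k + 1) : List (List (Fin n))) = Tab k ++ [col k] := by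
  simp [Tab, List.range_succ]

lemma decL_cons (v m : ℕ) : (decL v (m + 1) : List (Fin n)) = g v :: decL (v - 1) m := by
  simp only [decL, List.range_succ_eq_map, List.map_cons, List.map_map]
  congr 1
  apply List.map_congr_left
  intro j _
  show g (v - (j + 1)) = g (v - 1 - j)
  congr 1
  omega

lemma Tab_heads {y : ℕ} (hy : y ≤ n) {c : List (Fin n)} (hc : c ∈ Tab y)
    {v : ℕ} (hv : y ≤ v) (hvn : v ≤ n - 1) : (c.headI : Fin n) < g v := by
  simp only [Tab, List.mem_map, List.mem_range] at hc
  obtain ⟨t, ht, rfl⟩ := hc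
  have htn : t < n := lt_of_lt_of_le ht hy
  rw [col_headI htn]
  have h1 : ((g t : Fin n) : ℕ) = t := g_val (by omega)
  have h2 : ((g v : Fin n) : ℕ) = v := g_val hvn
  exact Fin.lt_def.mpr (by omega)

lemma insert_new : ∀ (T : List (List (Fin n))) (a : Fin n),
    (∀ c ∈ T, c.headI < a) → rpsInsert T a = T ++ [[a]] := by
  intro T
  induction T with
  | nil => intro a _; rfl
  | cons c rest ih =>
      intro a h
      have hc : c.headI < a := h c (by simp)
      simp only [rpsInsert, if_neg (not_le.mpr hc), List.cons_append, List.cons.injEq]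
      exact ⟨trivial, ih a (fun d hd => h d (by simp [hd]))⟩

lemma insert_last : ∀ (T : List (List (Fin n))) (c : List (Fin n)) (a : Fin n),
    (∀ d ∈ T, d.headI < a) → a ≤ c.headI →
    rpsInsert (T ++ [c]) a = T ++ [a :: c] := by
  intro T
  induction T with
  | nil =>
      intro c a _ hac
      simp [rpsInsert, if_pos hac]
  | cons d rest ih =>
      intro c a h hac
      have hd : d.headI < a := h d (by simp)
      simp only [List.cons_append, rpsInsert, if_neg (not_le.mpr hd), List.cons.injEq]
      exact ⟨trivial, ih c a (fun e he => h e (by simp [he])) hac⟩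

lemma bottomRow_append (T S : List (List (Fin n))) :
    bottomRow (T ++ S) = bottomRow T ++ bottomRow S := by
  simp [bottomRow]

lemma br_new_ne (T : List (List (Fin n))) (c : List (Fin n)) :
    bottomRow (T ++ [c]) ≠ bottomRow T := by
  intro h
  have := congrArg List.length h
  simp [bottomRow] at this

lemma br_last_ne (T : List (List (Fin n))) (c d : List (Fin n)) (h : c.headI ≠ d.headI) :
    bottomRow (T ++ [c]) ≠ bottomRow (T ++ [d]) := by
  intro hc
  rw [bottomRow_append, bottomRow_append] at hc
  have := List.append_cancel_left hc
  simp [bottomRow] at this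
  exact h this

lemma inner : ∀ (m y v : ℕ), y ≤ v → v + 1 < n → m = v + 1 - y →
    runT (Tab (n := n) y ++ [col (v+1)]) (decL v m) = Tab y ++ [col y] ∧
    cnt (Tab (n := n) y ++ [col (v+1)]) (decL v m) = m := by
  intro m
  induction m with
  | zero => intro y v h1 h2 h3; omega
  | succ m ih =>
      intro y v h1 h2 h3
      have hvn1 : v ≤ n - 1 := by omega
      have hstep : rpsInsert (Tab y ++ [col (v+1)]) (g v) = (Tab y ++ [col v] : List (List (Fin n))) := by
        rw [insert_last]
        · rw [← col_cons (by omega)]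
        · intro d hd
          exact Tab_heads (by omega) hd h1 hvn1
        · rw [col_headI (by omega)]
          have h4 : ((g v : Fin n) : ℕ) = v := g_val hvn1
          have h5 : ((g (v+1) : Fin n) : ℕ) = v + 1 := g_val (by omega)
          exact Fin.le_def.mpr (by omega)
      have hch : bottomRow (rpsInsert (Tab y ++ [col (v+1)]) (g v)) ≠
          bottomRow (Tab y ++ ([col (v+1)] : List (List (Fin n)))) := by
        rw [hstep]
        apply br_last_ne
        rw [col_headI (by omega), col_headI (by omega)]
        intro hgg
        have h4 := g_val (n := n) (k := v) hvn1
        have h5 := g_val (n := n) (k := v+1) (by omega)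
        rw [hgg] at h4
        omega
      rw [decL_cons]
      rcases Nat.eq_zero_or_pos m with hm0 | hmpos
      · -- v = y, last insertion
        have hvy : v = y := by omega
        subst hm0
        constructor
        · rw [runT_cons, hstep]
          subst hvy
          simp [runT, decL]
        · rw [cnt_cons, if_neg hch, hstep]
          simp [cnt, decL]
      · have hyv : y < v := by omega
        have hv1 : v - 1 + 1 = v := by omega
        have ihm := ih y (v - 1) (by omega) (by omega) (by omega)
        rw [hv1] at ihm
        constructor
        · rw [runT_cons, hstep]
          exact ihm.1
        · rw [cnt_cons, if_neg hch, hstep, ihm.2]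
          omega

lemma blockL (y : ℕ) (hy : y < n) :
    runT (Tab (n := n) y) (decL (n-1) (n - y)) = Tab (y + 1) ∧
    cnt (Tab (n := n) y) (decL (n-1) (n - y)) = n - y := by
  have hny : n - y = (n - y - 1) + 1 := by omega
  have hstep : rpsInsert (Tab y) (g (n-1)) = (Tab y ++ [col (n-1)] : List (List (Fin n))) := by
    rw [insert_new, col_last]
    intro c hc
    exact Tab_heads (le_of_lt hy) hc (by omega) (le_refl _)
  have hch : bottomRow (rpsInsert (Tab y) (g (n-1))) ≠ bottomRow (Tab (n := n) y) := by
    rw [hstep]; exact br_new_ne _ _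
  rw [hny, decL_cons]
  rcases Nat.eq_or_lt_of_le (Nat.succ_le_of_lt hy) with hyn | hyn
  · -- y = n - 1
    have hy1 : y = n - 1 := by omega
    have hm0 : n - y - 1 = 0 := by omega
    rw [hm0]
    constructor
    · rw [runT_cons, hstep]
      simp only [runT, List.foldl_nil, decL, List.range_zero, List.map_nil]
      rw [hy1, ← Tab_succ]
    · rw [cnt_cons, if_neg hch, hstep]
      simp [cnt, decL]
  · -- y < n - 1
    have hv : n - 1 - 1 = n - 2 := by omega
    have e1 : y ≤ n - 2 := by omega
    have e2 : n - 2 + 1 < n := by omega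
    have e3 : n - y - 1 = n - 2 + 1 - y := by omega
    have hinner := inner (n - y - 1) y (n - 2) e1 e2 e3
    have hcol : n - 2 + 1 = n - 1 := by omega
    rw [hcol] at hinner
    constructor
    · rw [runT_cons, hstep, hv, hinner.1, Tab_succ]
    · rw [cnt_cons, if_neg hch, hstep, hv, hinner.2]
      omega

def wmax : List (Fin n) := ((List.range n).map (fun y => decL (n-1) (n - y))).flatten

lemma join_run : ∀ (k : ℕ), k ≤ n →
    runT ([] : List (List (Fin n))) (((List.range k).map (fun y => decL (n-1) (n - y))).flatten) = Tab k ∧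
    cnt ([] : List (List (Fin n))) (((List.range k).map (fun y => decL (n-1) (n - y))).flatten) =
      ∑ y ∈ Finset.range k, (n - y) := by
  intro k
  induction k with
  | zero => intro _; exact ⟨rfl, rfl⟩
  | succ k ih =>
      intro hk
      have ihk := ih (by omega)
      rw [List.range_succ, List.map_append, List.flatten_append]
      simp only [List.map_cons, List.map_nil, List.flatten_cons, List.flatten_nil, List.append_nil]
      have hb := blockL (n := n) k (by omega)
      rw [runT_append, cnt_append, ihk.1, ihk.2, hb.1, hb.2, Finset.sum_range_succ]
      exact ⟨rfl, rfl⟩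

lemma attained : rpsChanges (wmax : List (Fin n)) = n * (n + 1) / 2 := by
  rw [rpsChanges_eq]
  have h := (join_run n (le_refl n)).2
  rw [show (wmax : List (Fin n)) = ((List.range n).map (fun y => decL (n-1) (n - y))).flatten from rfl, h]
  have hrefl := Finset.sum_range_reflect (fun y => n - y) n
  have hsum : ∑ j ∈ Finset.range n, (n - (n - 1 - j)) = ∑ j ∈ Finset.range n, (j + 1) := by
    apply Finset.sum_congr rfl
    intro j hj
    simp only [Finset.mem_range] at hj
    omega
  have hgauss : (∑ i ∈ Finset.range n, i) * 2 = n * (n - 1) := Finset.sum_range_id_mul_two n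
  have hsplit : ∑ j ∈ Finset.range n, (j + 1) = (∑ j ∈ Finset.range n, j) + n := by
    rw [Finset.sum_add_distrib]
    simp
  have h2 : 2 * (∑ y ∈ Finset.range n, (n - y)) = n * (n + 1) := by
    rw [← hrefl, hsum, hsplit]
    have hn := NeZero.pos n
    obtain ⟨p, rfl⟩ : ∃ p, n = p + 1 := ⟨n - 1, by omega⟩
    simp only [Nat.add_sub_cancel] at hgauss
    nlinarith [hgauss]
  omega

end Attain

/-- The number of bottom-row changes during insertion of any word
w ∈ [n]* is at most n(n+1)/2, and this bound is attained by some word. -/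
theorem stmt_19 (n : ℕ) [NeZero n] :
    (∀ w : List (Fin n), rpsChanges w ≤ n * (n + 1) / 2) ∧
    (∃ w : List (Fin n), rpsChanges w = n * (n + 1) / 2) := by
  exact ⟨fun w => upper w, ⟨wmax, attained⟩⟩
end
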